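/- Two-particle self-duality at the level of generators: for every η ∈ Ξ and every (x,y) ∈ S, applying the partial exclusion generator L to the function η ↦ D((x,y),η) and evaluating at η yields the same value as applying the two-particle generator A^{(2)} to the function (z,w) ↦ D((z,w),η) and evaluating at (x,y); here D((z,w),η) := (η(z)/α_z) · (η(w) − 1_{z=w})/(α_w − 1_{z=w}) for (z,w) ∈ S, with the convention D((z,w),η) := 0 when z = w and α_z = 1 (such states carry zero rate in A^{(2)}). -/

import Mathlib

open scoped BigOperators

/-- Configuration space: at most `α x` particles at each site `x`. -/
abbrev Conf {V : Type*} (α : V → ℕ) : Type _ := ∀ x : V, Fin (α x + 1)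

/-- The configuration `η` with one particle moved from `x` to `y`. -/
def move {V : Type*} [DecidableEq V] (α : V → ℕ) (η : Conf α) (x y : V) : Conf α :=
  Function.update
    (Function.update η x ⟨(η x : ℕ) - 1, by have := (η x).isLt; omega⟩)
    y ⟨min ((η y : ℕ) + 1) (α y), by
      have := Nat.min_le_right ((η y : ℕ) + 1) (α y); omega⟩

/-- Jump rate of the partial exclusion process of interacting BTM(a):
rate for moving a particle from `x` to `y`.  It vanishes if `η x = 0` or
`η y = α y`, so `move` is only effectively used where it is well defined. -/
noncomputable def jumpRate {V : Type*} (α : V → ℕ) (a : ℝ) (η : Conf α) (x y : V) : ℝ :=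
  ((η x : ℕ) : ℝ) * (α x : ℝ) ^ (a - 1) * (α y : ℝ) ^ a *
    (1 - ((η y : ℕ) : ℝ) / (α y : ℝ))

/-- The partial exclusion generator `L` in environment `α`. -/
noncomputable def gen {V : Type*} [Fintype V] [DecidableEq V] (α : V → ℕ) (a : ℝ)
    (adj : V → V → Prop) [DecidableRel adj] (φ : Conf α → ℝ) (η : Conf α) : ℝ :=
  ∑ x : V, ∑ y : V,
    if adj x y then jumpRate α a η x y * (φ (move α η x y) - φ η) else 0

/-- The single-particle (Bouchaud trap model) generator `A`. -/
noncomputable def sgen {V : Type*} [Fintype V] (α : V → ℕ) (a : ℝ)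
    (adj : V → V → Prop) [DecidableRel adj] (g : V → ℝ) (x : V) : ℝ :=
  (α x : ℝ) ^ (a - 1) * ∑ y : V, if adj x y then (α y : ℝ) ^ a * (g y - g x) else 0

/-- The two-particle generator `A^{(2)}` of two interacting BTM(a) particles. -/
noncomputable def gen2 {V : Type*} [Fintype V] [DecidableEq V] (α : V → ℕ) (a : ℝ)
    (adj : V → V → Prop) [DecidableRel adj] (h : V → V → ℝ) (z w : V) : ℝ :=
  (α z : ℝ) ^ (a - 1) *
      (∑ u : V, if adj z u then
        (α u : ℝ) ^ a * (1 - (if u = w then 1 else 0) / (α u : ℝ)) * (h u w - h z w)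
      else 0)
    + (α w : ℝ) ^ (a - 1) *
      (∑ u : V, if adj w u then
        (α u : ℝ) ^ a * (1 - (if u = z then 1 else 0) / (α u : ℝ)) * (h z u - h z w)
      else 0)

/-- The two-particle duality function `D((z,w), η)`, with the convention that
it vanishes when `z = w` and `α z = 1` (such states carry zero rate). -/
noncomputable def D2 {V : Type*} [DecidableEq V] (α : V → ℕ) (η : Conf α) (z w : V) : ℝ :=
  if z = w ∧ α z = 1 then 0
  else (((η z : ℕ) : ℝ) / (α z : ℝ)) *
    ((((η w : ℕ) : ℝ) - (if z = w then 1 else 0)) /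
      ((α w : ℝ) - (if z = w then 1 else 0)))

section aux
variable {V : Type*} [DecidableEq V]

lemma move_apply_ne (α : V → ℕ) (η : Conf α) {z w u : V} (huz : u ≠ z) (huw : u ≠ w) :
    move α η z w u = η u := by
  unfold move
  rw [Function.update_of_ne huw, Function.update_of_ne huz]

lemma move_apply_z (α : V → ℕ) (η : Conf α) {z w : V} (hzw : z ≠ w) :
    ((move α η z w z : ℕ)) = (η z : ℕ) - 1 := by
  unfold move
  rw [Function.update_of_ne hzw, Function.update_self]

lemma move_apply_w (α : V → ℕ) (η : Conf α) (z w : V) :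
    ((move α η z w w : ℕ)) = min ((η w : ℕ) + 1) (α w) := by
  unfold move; rw [Function.update_self]

noncomputable def D2' (α : V → ℕ) (f : V → ℝ) (z w : V) : ℝ :=
  if z = w ∧ α z = 1 then 0
  else (f z / (α z : ℝ)) *
    ((f w - (if z = w then 1 else 0)) / ((α w : ℝ) - (if z = w then 1 else 0)))

lemma D2_eq_D2' (α : V → ℕ) (η : Conf α) (z w : V) :
    D2 α η z w = D2' α (fun u => ((η u : ℕ) : ℝ)) z w := rfl

noncomputable def nu (α : V → ℕ) (η : Conf α) (z w : V) : V → ℝ := fun u =>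
  if u = z then ((η z : ℕ) : ℝ) - 1
  else if u = w then ((η w : ℕ) : ℝ) + 1 else ((η u : ℕ) : ℝ)

lemma nu_fst (α : V → ℕ) (η : Conf α) (z w : V) :
    nu α η z w z = ((η z : ℕ) : ℝ) - 1 := by simp [nu]

lemma nu_snd (α : V → ℕ) (η : Conf α) {z w : V} (h : w ≠ z) :
    nu α η z w w = ((η w : ℕ) : ℝ) + 1 := by simp [nu, h]

lemma nu_other (α : V → ℕ) (η : Conf α) {z w u : V} (h1 : u ≠ z) (h2 : u ≠ w) :
    nu α η z w u = ((η u : ℕ) : ℝ) := by simp [nu, h1, h2]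

lemma D2'_of_ne (α : V → ℕ) (f : V → ℝ) {z w : V} (h : z ≠ w) :
    D2' α f z w = (f z / (α z : ℝ)) * (f w / (α w : ℝ)) := by
  simp [D2', h]

lemma D2'_diag (α : V → ℕ) (f : V → ℝ) {z : V} (h : ¬ α z = 1) :
    D2' α f z z = (f z / (α z : ℝ)) * ((f z - 1) / ((α z : ℝ) - 1)) := by
  simp [D2', h]

lemma D2'_diag1 (α : V → ℕ) (f : V → ℝ) {z : V} (h : α z = 1) :
    D2' α f z z = 0 := by simp [D2', h]

lemma D2_of_ne (α : V → ℕ) (η : Conf α) {z w : V} (h : z ≠ w) :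
    D2 α η z w = (((η z : ℕ) : ℝ) / (α z : ℝ)) * (((η w : ℕ) : ℝ) / (α w : ℝ)) := by
  simp [D2, h]

lemma D2_diag (α : V → ℕ) (η : Conf α) {z : V} (h : ¬ α z = 1) :
    D2 α η z z = (((η z : ℕ) : ℝ) / (α z : ℝ)) * ((((η z : ℕ) : ℝ) - 1) / ((α z : ℝ) - 1)) := by
  simp [D2, h]

lemma D2_diag1 (α : V → ℕ) (η : Conf α) {z : V} (h : α z = 1) :
    D2 α η z z = 0 := by simp [D2, h]

lemma key (α : V → ℕ) (hα : ∀ x, 1 ≤ α x) (a : ℝ) (η : Conf α) {z w : V} (hzw : z ≠ w)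
    (x y : V) :
    jumpRate α a η z w * (D2 α (move α η z w) x y - D2 α η x y)
      = jumpRate α a η z w * (D2' α (nu α η z w) x y - D2' α (fun u => ((η u : ℕ) : ℝ)) x y) := by
  rw [← D2_eq_D2']
  by_cases h0 : (η z : ℕ) = 0
  · simp [jumpRate, h0]
  by_cases h1 : (η w : ℕ) = α w
  · have hw0 : ((α w : ℕ) : ℝ) ≠ 0 := by
      have := hα w; positivity
    have hw : (1 : ℝ) - ((η w : ℕ) : ℝ) / (α w : ℝ) = 0 := by
      rw [h1]; field_simp; norm_num
    simp [jumpRate, hw]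
  · have hfun : (fun u => ((move α η z w u : ℕ) : ℝ)) = nu α η z w := by
      funext u
      unfold nu
      by_cases huz : u = z
      · subst huz
        rw [move_apply_z α η hzw, if_pos rfl]
        have : 1 ≤ (η u : ℕ) := Nat.one_le_iff_ne_zero.mpr h0
        push_cast [Nat.cast_sub this]
        ring
      · rw [if_neg huz]
        by_cases huw : u = w
        · subst huw
          have hlt : (η u : ℕ) < α u := lt_of_le_of_ne (by have := (η u).isLt; omega) h1
          rw [move_apply_w, if_pos rfl, min_eq_left (by omega)]
          push_cast; ring
        · rw [if_neg huw, move_apply_ne α η huz huw]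
    rw [D2_eq_D2' α (move α η z w), hfun]

end aux

section decomp
variable {V : Type*} [Fintype V] [DecidableEq V]

lemma decomp_ne (T : V → V → ℝ) (x y : V) (hxy : x ≠ y)
    (hvan : ∀ z w, z ≠ x → z ≠ y → w ≠ x → w ≠ y → T z w = 0)
    (hxx : T x x = 0) (hyy : T y y = 0) :
    ∑ z : V, ∑ w : V, T z w
      = (∑ u : V, (T x u + T u x + T y u + T u y)) - T x y - T y x := by
  have hpt : ∀ z w, T z w
      = (if z = x then T x w else 0) + (if w = x then T z x else 0)
        + (if z = y then T y w else 0) + (if w = y then T z y else 0)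
        - (if z = x then (if w = y then T x y else 0) else 0)
        - (if z = y then (if w = x then T y x else 0) else 0) := by
    intro z w
    by_cases hzx : z = x <;> by_cases hzy : z = y <;> by_cases hwx : w = x <;>
      by_cases hwy : w = y <;> subst_vars <;> simp_all
  calc ∑ z : V, ∑ w : V, T z w
      = ∑ z : V, ∑ w : V,
        ((if z = x then T x w else 0) + (if w = x then T z x else 0)
        + (if z = y then T y w else 0) + (if w = y then T z y else 0)
        - (if z = x then (if w = y then T x y else 0) else 0)
        - (if z = y then (if w = x then T y x else 0) else 0)) :=
        Finset.sum_congr rfl fun z _ => Finset.sum_congr rfl fun w _ => hpt z w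
    _ = _ := by
        simp only [Finset.sum_sub_distrib, Finset.sum_add_distrib,
          Finset.sum_ite_eq' Finset.univ, Finset.mem_univ, if_true,
          ← Finset.sum_ite_eq' Finset.univ]
        simp [Finset.sum_add_distrib, sub_eq_add_neg]

lemma decomp_eq (T : V → V → ℝ) (x : V)
    (hvan : ∀ z w, z ≠ x → w ≠ x → T z w = 0) (hxx : T x x = 0) :
    ∑ z : V, ∑ w : V, T z w = ∑ u : V, (T x u + T u x) := by
  have hpt : ∀ z w, T z w
      = (if z = x then T x w else 0) + (if w = x then T z x else 0) := by
    intro z w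
    by_cases hzx : z = x <;> by_cases hwx : w = x <;> subst_vars <;> simp_all
  calc ∑ z : V, ∑ w : V, T z w
      = ∑ z : V, ∑ w : V,
        ((if z = x then T x w else 0) + (if w = x then T z x else 0)) :=
        Finset.sum_congr rfl fun z _ => Finset.sum_congr rfl fun w _ => hpt z w
    _ = _ := by
        simp only [Finset.sum_add_distrib, Finset.sum_ite_eq' Finset.univ,
          Finset.mem_univ, if_true]
        simp [Finset.sum_add_distrib]

lemma sum_split_two (F : V → ℝ) (x y : V) (hxy : x ≠ y) :
    ∑ u : V, F u = F x + F y + ∑ u ∈ (Finset.univ.erase x).erase y, F u := by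
  rw [← Finset.add_sum_erase _ F (Finset.mem_univ x)]
  rw [← Finset.add_sum_erase _ F (Finset.mem_erase.mpr ⟨hxy.symm, Finset.mem_univ y⟩)]
  ring

end decomp

set_option maxHeartbeats 1000000 in
/-- two-particle self-duality at the level of generators. -/
theorem two_particle_duality {V : Type*} [Fintype V] [DecidableEq V]
    (adj : V → V → Prop) [DecidableRel adj]
    (hsym : ∀ x y, adj x y → adj y x) (hirr : ∀ x, ¬ adj x x)
    (a : ℝ) (ha0 : 0 ≤ a) (ha1 : a ≤ 1)
    (α : V → ℕ) (hα : ∀ x, 1 ≤ α x)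
    (η : Conf α) (x y : V) (hS : x ≠ y ∨ 2 ≤ α x) :
    gen α a adj (fun ξ => D2 α ξ x y) η
      = gen2 α a adj (fun z w => D2 α η z w) x y := by
    classical
  have hppos : ∀ u : V, (0:ℝ) < ((α u : ℕ) : ℝ) := fun u => by
    have := hα u; exact_mod_cast Nat.lt_of_lt_of_le Nat.zero_lt_one this
  have hpne : ∀ u : V, ((α u : ℕ) : ℝ) ≠ 0 := fun u => (hppos u).ne'
  have hr : ∀ u : V, ((α u : ℕ) : ℝ) ^ (a-1) = ((α u : ℕ) : ℝ) ^ a / ((α u : ℕ) : ℝ) := by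
    intro u
    rw [Real.rpow_sub (hppos u), Real.rpow_one]
  set T : V → V → ℝ := fun z w =>
    if adj z w then jumpRate α a η z w * (D2 α (move α η z w) x y - D2 α η x y) else 0
    with hT
  have hgen : gen α a adj (fun ξ => D2 α ξ x y) η = ∑ z : V, ∑ w : V, T z w := rfl
  have hTdiag : ∀ z, T z z = 0 := fun z => by simp [hT, hirr z]
  have hvan : ∀ z w, z ≠ x → z ≠ y → w ≠ x → w ≠ y → T z w = 0 := by
    intro z w hzx hzy hwx hwy
    simp only [hT]
    split
    · rw [show D2 α (move α η z w) x y = D2 α η x y by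
        unfold D2
        rw [move_apply_ne α η (Ne.symm hzx) (Ne.symm hwx),
          move_apply_ne α η (Ne.symm hzy) (Ne.symm hwy)]]
      simp
    · rfl
  set g : V → ℝ := fun u =>
    (α x : ℝ) ^ (a - 1) *
      (if adj x u then
        (α u : ℝ) ^ a * (1 - (if u = y then 1 else 0) / (α u : ℝ)) *
          (D2 α η u y - D2 α η x y) else 0)
    + (α y : ℝ) ^ (a - 1) *
      (if adj y u then
        (α u : ℝ) ^ a * (1 - (if u = x then 1 else 0) / (α u : ℝ)) *
          (D2 α η x u - D2 α η x y) else 0) with hg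
  have hgen2 : gen2 α a adj (fun z w => D2 α η z w) x y = ∑ u : V, g u := by
    unfold gen2
    rw [Finset.mul_sum, Finset.mul_sum, ← Finset.sum_add_distrib]
  rw [hgen, hgen2]
  by_cases hxy : x = y
  · -- diagonal case
    subst hxy
    have hα2 : 2 ≤ α x := hS.resolve_left fun h => (h rfl).elim
    have hαx1 : ¬ (α x = 1) := by omega
    have hpx1 : ((α x : ℕ) : ℝ) - 1 ≠ 0 := by
      have h2 : (2:ℝ) ≤ ((α x : ℕ):ℝ) := by exact_mod_cast hα2
      intro h; nlinarith
    rw [decomp_eq T x (fun z w hz hw => hvan z w hz hz hw hw) (hTdiag x)]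
    refine Finset.sum_congr rfl fun u _ => ?_
    by_cases hux : u = x
    · subst hux; simp [hT, hg, hirr u]
    · by_cases hadj : adj x u
      · have hadj' : adj u x := hsym _ _ hadj
        have hxu : x ≠ u := Ne.symm hux
        simp only [hT, hg, if_pos hadj, if_pos hadj', if_neg hux]
        rw [key α hα a η hxu x x, key α hα a η hux x x]
        rw [D2'_diag α _ hαx1, D2'_diag α _ hαx1, D2'_diag α _ hαx1,
            nu_fst α η x u, nu_snd α η hxu,
            D2_of_ne α η hux, D2_of_ne α η hxu, D2_diag α η hαx1]
        simp only [jumpRate]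
        rw [hr x, hr u]
        have h1 := hpne x; have h2 := hpne u
        field_simp
        ring
      · have hadj' : ¬ adj u x := fun h => hadj (hsym _ _ h)
        simp [hT, hg, hadj, hadj']
  · -- off-diagonal case
    rw [decomp_ne T x y hxy hvan (hTdiag x) (hTdiag y)]
    rw [sum_split_two (fun u => T x u + T u x + T y u + T u y) x y hxy,
        sum_split_two g x y hxy]
    have hfx : T x x + T x x + T y x + T x y = T x y + T y x := by
      rw [hTdiag x]; ring
    have hfy : T x y + T y x + T y y + T y y = T x y + T y x := by
      rw [hTdiag y]; ring
    have hE : ∑ u ∈ (Finset.univ.erase x).erase y, (T x u + T u x + T y u + T u y)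
        = ∑ u ∈ (Finset.univ.erase x).erase y, g u := by
      refine Finset.sum_congr rfl fun u hu => ?_
      have huy : u ≠ y := (Finset.mem_erase.mp hu).1
      have hux : u ≠ x := (Finset.mem_erase.mp ((Finset.mem_erase.mp hu).2)).1
      have hxu : x ≠ u := Ne.symm hux
      have hyu : y ≠ u := Ne.symm huy
      have hyx : y ≠ x := Ne.symm hxy
      have hD' : ∀ f : V → ℝ, D2' α f x y = (f x / (α x : ℝ)) * (f y / (α y : ℝ)) :=
        fun f => D2'_of_ne α f hxy
      by_cases h1 : adj x u <;> by_cases h2 : adj y u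
      · have h1' : adj u x := hsym _ _ h1
        have h2' : adj u y := hsym _ _ h2
        simp only [hT, hg, if_pos h1, if_pos h1', if_pos h2, if_pos h2',
          if_neg hux, if_neg huy]
        rw [key α hα a η hxu x y, key α hα a η hux x y,
            key α hα a η hyu x y, key α hα a η huy x y]
        rw [hD', hD', hD', hD', hD',
            nu_fst α η x u, nu_other α η hyx hyu,
            nu_snd α η hxu, nu_other α η hyu hyx,
            nu_other α η hxy hxu, nu_fst α η y u,
            nu_other α η hxu hxy, nu_snd α η hyu,
            D2_of_ne α η huy, D2_of_ne α η hxy, D2_of_ne α η hxu]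
        simp only [jumpRate]
        rw [hr x, hr y, hr u]
        have h01 := hpne x; have h02 := hpne y; have h03 := hpne u
        field_simp
        ring
      · have h1' : adj u x := hsym _ _ h1
        have h2' : ¬ adj u y := fun h => h2 (hsym _ _ h)
        simp only [hT, hg, if_pos h1, if_pos h1', if_neg h2, if_neg h2',
          if_neg hux, if_neg huy, mul_zero, add_zero, zero_add]
        rw [key α hα a η hxu x y, key α hα a η hux x y]
        rw [hD', hD', hD',
            nu_fst α η x u, nu_other α η hyx hyu,
            nu_snd α η hxu, nu_other α η hyu hyx,
            D2_of_ne α η huy, D2_of_ne α η hxy]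
        simp only [jumpRate]
        rw [hr x, hr u]
        have h01 := hpne x; have h02 := hpne y; have h03 := hpne u
        field_simp
        ring
      · have h1' : ¬ adj u x := fun h => h1 (hsym _ _ h)
        have h2' : adj u y := hsym _ _ h2
        simp only [hT, hg, if_neg h1, if_neg h1', if_pos h2, if_pos h2',
          if_neg hux, if_neg huy, mul_zero, add_zero, zero_add]
        rw [key α hα a η hyu x y, key α hα a η huy x y]
        rw [hD', hD', hD',
            nu_other α η hxy hxu, nu_fst α η y u,
            nu_other α η hxu hxy, nu_snd α η hyu,
            D2_of_ne α η hxy, D2_of_ne α η hxu]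
        simp only [jumpRate]
        rw [hr y, hr u]
        have h01 := hpne x; have h02 := hpne y; have h03 := hpne u
        field_simp
        ring
      · have h1' : ¬ adj u x := fun h => h1 (hsym _ _ h)
        have h2' : ¬ adj u y := fun h => h2 (hsym _ _ h)
        simp [hT, hg, h1, h2, h1', h2']
    have hbd : T x y + T y x = g x + g y := by
      by_cases hadj : adj x y
      · have hadj' : adj y x := hsym _ _ hadj
        simp only [hT, hg, if_pos hadj, if_pos hadj', if_neg (hirr x), if_neg (hirr y),
          if_pos rfl, mul_zero, zero_add, add_zero]
        have hyx : y ≠ x := Ne.symm hxy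
        rw [key α hα a η hxy x y, key α hα a η hyx x y]
        rw [D2'_of_ne α _ hxy, D2'_of_ne α _ hxy, D2'_of_ne α _ hxy,
            nu_fst α η x y, nu_snd α η hyx,
            nu_snd α η hxy, nu_fst α η y x,
            D2_of_ne α η hxy]
        simp only [jumpRate]
        rw [hr x, hr y]
        have h01 := hpne x; have h02 := hpne y
        by_cases hax : α x = 1 <;> by_cases hay : α y = 1
        · rw [D2_diag1 α η hax, D2_diag1 α η hay]
          have hex : (η x : ℕ) = 0 ∨ (η x : ℕ) = 1 := by have := (η x).isLt; omega
          have hey : (η y : ℕ) = 0 ∨ (η y : ℕ) = 1 := by have := (η y).isLt; omega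
          have hpx : ((α x : ℕ) : ℝ) = 1 := by rw [hax]; norm_num
          have hpy : ((α y : ℕ) : ℝ) = 1 := by rw [hay]; norm_num
          rw [hpx, hpy]
          rcases hex with h | h <;> rcases hey with h' | h' <;> rw [h, h'] <;> norm_num
        · rw [D2_diag1 α η hax, D2_diag α η hay]
          have hex : (η x : ℕ) = 0 ∨ (η x : ℕ) = 1 := by have := (η x).isLt; omega
          have hpx : ((α x : ℕ) : ℝ) = 1 := by rw [hax]; norm_num
          have hpy1 : ((α y : ℕ) : ℝ) - 1 ≠ 0 := by
            have h2n : 2 ≤ α y := by have := hα y; omega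
            have : (2:ℝ) ≤ ((α y : ℕ):ℝ) := by exact_mod_cast h2n
            intro h; nlinarith
          rw [hpx]
          rcases hex with h | h <;> rw [h] <;> push_cast <;> field_simp <;> ring
        · rw [D2_diag α η hax, D2_diag1 α η hay]
          have hey : (η y : ℕ) = 0 ∨ (η y : ℕ) = 1 := by have := (η y).isLt; omega
          have hpy : ((α y : ℕ) : ℝ) = 1 := by rw [hay]; norm_num
          have hpx1 : ((α x : ℕ) : ℝ) - 1 ≠ 0 := by
            have h2n : 2 ≤ α x := by have := hα x; omega
            have : (2:ℝ) ≤ ((α x : ℕ):ℝ) := by exact_mod_cast h2n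
            intro h; nlinarith
          rw [hpy]
          rcases hey with h | h <;> rw [h] <;> push_cast <;> field_simp <;> ring
        · rw [D2_diag α η hax, D2_diag α η hay]
          have hpx1 : ((α x : ℕ) : ℝ) - 1 ≠ 0 := by
            have h2n : 2 ≤ α x := by have := hα x; omega
            have : (2:ℝ) ≤ ((α x : ℕ):ℝ) := by exact_mod_cast h2n
            intro h; nlinarith
          have hpy1 : ((α y : ℕ) : ℝ) - 1 ≠ 0 := by
            have h2n : 2 ≤ α y := by have := hα y; omega
            have : (2:ℝ) ≤ ((α y : ℕ):ℝ) := by exact_mod_cast h2n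
            intro h; nlinarith
          field_simp
          simp only [↓reduceIte]
          ring
      · have hadj' : ¬ adj y x := fun h => hadj (hsym _ _ h)
        simp [hT, hg, hadj, hadj', hirr x, hirr y]
    beta_reduce
    linarith [hfx, hfy, hE, hbd]
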